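/- Suppose char k = 2, α = q, and β ∉ {qⁱ : i ∈ ℤ}. Then dim_k Im dₙ = 2n for all n ≥ 1, and consequently dim_k Ker d_{n+1} − dim_k Im dₙ = 2 for every n > 0, i.e. dim_k HHⁿ(Λ, ₁Λ_ψ) = 2. -/

import Mathlib

/-- The matrix of the differential `dₙ : Λⁿ → Λ^{n+1}` of the complex computing
`HH^*(Λ, ₁Λ_ψ)` for `ψ(x) = αx`, `ψ(y) = βy`, in the standard basis
`{eᵢ, xeᵢ, yeᵢ, yxeᵢ}` (encoded by `Fin 4` as `0 ↦ eᵢ, 1 ↦ xeᵢ, 2 ↦ yeᵢ, 3 ↦ yxeᵢ`):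
`eᵢ^{n−1} ↦ [1+(−1)ⁿqⁱα]xeᵢⁿ + [q^{n−i−1}+(−1)ⁿβ]ye^n_{i+1}`,
`xeᵢ^{n−1} ↦ [q^{n−i−1}+(−1)^{n+1}qβ]yxe^n_{i+1}`,
`yeᵢ^{n−1} ↦ [−q+(−1)ⁿqⁱα]yxeᵢⁿ`, `yxeᵢ^{n−1} ↦ 0`. -/
def Dmat (k : Type) [Field k] (q α β : k) (n : ℕ) :
    Matrix (Fin (n + 1) × Fin 4) (Fin n × Fin 4) k := fun jb ia =>
  if jb.2 = 1 ∧ ia.2 = 0 ∧ (jb.1 : ℕ) = (ia.1 : ℕ) then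
    1 + (-1 : k) ^ n * q ^ (ia.1 : ℕ) * α
  else if jb.2 = 2 ∧ ia.2 = 0 ∧ (jb.1 : ℕ) = (ia.1 : ℕ) + 1 then
    q ^ (n - (ia.1 : ℕ) - 1) + (-1 : k) ^ n * β
  else if jb.2 = 3 ∧ ia.2 = 1 ∧ (jb.1 : ℕ) = (ia.1 : ℕ) + 1 then
    q ^ (n - (ia.1 : ℕ) - 1) + (-1 : k) ^ (n + 1) * q * β
  else if jb.2 = 3 ∧ ia.2 = 2 ∧ (jb.1 : ℕ) = (ia.1 : ℕ) then
    -q + (-1 : k) ^ n * q ^ (ia.1 : ℕ) * α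
  else 0

/-- The differential `dₙ : Λⁿ → Λ^{n+1}` as a `k`-linear map. -/
noncomputable def dMap (k : Type) [Field k] (q α β : k) (n : ℕ) :
    (Fin n × Fin 4 → k) →ₗ[k] (Fin (n + 1) × Fin 4 → k) :=
  (Dmat k q α β n).mulVecLin

open Matrix

/-- The spanning family for the image: columns `(i,0)` and scaled basis vectors `e_{(j+1,3)}`. -/
noncomputable def Bfam (k : Type) [Field k] (q β : k) (n : ℕ) :
    Fin n ⊕ Fin n → (Fin (n + 1) × Fin 4 → k)
  | .inl i => fun jb => Dmat k q q β n jb (i, 0)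
  | .inr j => Pi.single (j.succ, (3 : Fin 4)) 1

lemma col1_eq (k : Type) [Field k] (q β : k) (n : ℕ) (i : Fin n) :
    (Dmat k q q β n)ᵀ (i, 1) =
      (q ^ (n - (i : ℕ) - 1) + (-1 : k) ^ (n + 1) * q * β) •
        (Pi.single (i.succ, (3 : Fin 4)) 1 : Fin (n + 1) × Fin 4 → k) := by
  funext jb
  obtain ⟨j, b⟩ := jb
  simp only [Matrix.transpose_apply, Dmat, Pi.smul_apply, smul_eq_mul, Pi.single_apply,
    Prod.mk.injEq, Fin.ext_iff, Fin.val_succ]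
  split_ifs <;> simp_all

lemma col2_eq (k : Type) [Field k] (q β : k) (n : ℕ) (i j : Fin n)
    (hij : (i : ℕ) = (j : ℕ) + 1) :
    (Dmat k q q β n)ᵀ (i, 2) =
      (-q + (-1 : k) ^ n * q ^ (i : ℕ) * q) •
        (Pi.single (j.succ, (3 : Fin 4)) 1 : Fin (n + 1) × Fin 4 → k) := by
  funext jb
  obtain ⟨j', b⟩ := jb
  simp only [Matrix.transpose_apply, Dmat, Pi.smul_apply, smul_eq_mul, Pi.single_apply,
    Prod.mk.injEq, Fin.ext_iff, Fin.val_succ]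
  split_ifs <;> simp_all

lemma col2_zero (k : Type) [Field k] (q β : k) (hneg : (-1 : k) = 1) (n : ℕ) (i : Fin n)
    (h0 : (i : ℕ) = 0) :
    (Dmat k q q β n)ᵀ (i, 2) = 0 := by
  funext jb
  obtain ⟨j, b⟩ := jb
  simp only [Matrix.transpose_apply, Dmat]
  split_ifs <;> simp_all

lemma col3_zero (k : Type) [Field k] (q β : k) (n : ℕ) (i : Fin n) :
    (Dmat k q q β n)ᵀ (i, 3) = 0 := by
  funext jb
  obtain ⟨j, b⟩ := jb
  simp only [Matrix.transpose_apply, Dmat]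
  split_ifs <;> simp_all

lemma rank_d (k : Type) [Field k] (q β : k) (hq : q ≠ 0)
    (hq' : ∀ m : ℕ, 0 < m → q ^ m ≠ 1)
    (hchar : ringChar k = 2)
    (hBetaSigma : ¬∃ i : ℤ, β = q ^ i) (n : ℕ) :
    Module.finrank k ↥(LinearMap.range (dMap k q q β n)) = 2 * n := by
  have hch : CharP k 2 := ringChar.eq_iff.mp hchar
  have h2 : (1 : k) + 1 = 0 := by
    have h := CharP.cast_eq_zero k 2
    push_cast at h
    linear_combination h
  have hneg : (-1 : k) = 1 := by linear_combination -h2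
  -- nonvanishing of the key coefficients
  have hc : ∀ i : ℕ, (1 : k) + (-1 : k) ^ n * q ^ i * q ≠ 0 := by
    intro i h
    rw [hneg, one_pow, one_mul] at h
    exact hq' (i + 1) (Nat.succ_pos i) (by rw [pow_succ]; linear_combination h - h2)
  have ha : ∀ i : ℕ, q ^ (n - i - 1) + (-1 : k) ^ (n + 1) * q * β ≠ 0 := by
    intro i h
    rw [hneg, one_pow, one_mul] at h
    apply hBetaSigma
    refine ⟨((n - i - 1 : ℕ) : ℤ) - 1, ?_⟩
    rw [zpow_sub₀ hq, zpow_natCast, zpow_one]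
    field_simp
    linear_combination -h + q * β * h2
  -- span equality
  have hspan : Submodule.span k (Set.range (Dmat k q q β n)ᵀ) =
      Submodule.span k (Set.range (Bfam k q β n)) := by
    apply le_antisymm
    · rw [Submodule.span_le]
      rintro _ ⟨⟨i, a⟩, rfl⟩
      fin_cases a
      · exact Submodule.subset_span ⟨Sum.inl i, rfl⟩
      · show (Dmat k q q β n)ᵀ (i, 1) ∈
          (Submodule.span k (Set.range (Bfam k q β n)) : Set (Fin (n + 1) × Fin 4 → k))
        rw [col1_eq]
        exact Submodule.smul_mem _ _ (Submodule.subset_span ⟨Sum.inr i, rfl⟩)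
      · show (Dmat k q q β n)ᵀ (i, 2) ∈
          (Submodule.span k (Set.range (Bfam k q β n)) : Set (Fin (n + 1) × Fin 4 → k))
        rcases Nat.eq_zero_or_pos (i : ℕ) with h0 | hpos
        · rw [col2_zero k q β hneg n i h0]
          exact Submodule.zero_mem _
        · have hjlt : (i : ℕ) - 1 < n := lt_of_le_of_lt (Nat.sub_le _ _) i.isLt
          rw [col2_eq k q β n i ⟨(i : ℕ) - 1, hjlt⟩
            (by show (i : ℕ) = (i : ℕ) - 1 + 1; omega)]
          exact Submodule.smul_mem _ _ (Submodule.subset_span ⟨Sum.inr ⟨(i : ℕ) - 1, hjlt⟩, rfl⟩)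
      · show (Dmat k q q β n)ᵀ (i, 3) ∈
          (Submodule.span k (Set.range (Bfam k q β n)) : Set (Fin (n + 1) × Fin 4 → k))
        rw [col3_zero]
        exact Submodule.zero_mem _
    · rw [Submodule.span_le]
      rintro _ ⟨v, rfl⟩
      cases v with
      | inl i =>
        refine Submodule.subset_span ⟨(i, 0), ?_⟩
        funext jb
        rfl
      | inr j =>
        have : Bfam k q β n (Sum.inr j) =
            (q ^ (n - (j : ℕ) - 1) + (-1 : k) ^ (n + 1) * q * β)⁻¹ •
              (Dmat k q q β n)ᵀ (j, 1) := by
          rw [col1_eq, smul_smul, inv_mul_cancel₀ (ha j), one_smul]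
          rfl
        rw [this]
        exact Submodule.smul_mem _ _ (Submodule.subset_span ⟨(j, 1), rfl⟩)
  -- linear independence of Bfam
  have hB : LinearIndependent k (Bfam k q β n) := by
    set idx : Fin n ⊕ Fin n → Fin (n + 1) × Fin 4 :=
      Sum.elim (fun i => (Fin.castSucc i, 1)) (fun j => (j.succ, 3)) with hidx
    apply LinearIndependent.of_comp (LinearMap.funLeft k k idx)
    set u : Fin n ⊕ Fin n → kˣ :=
      Sum.elim (fun i => Units.mk0 _ (hc (i : ℕ))) (fun _ => 1) with hu
    have key : (⇑(LinearMap.funLeft k k idx)) ∘ (Bfam k q β n) =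
        u • (fun v => (Pi.single v 1 : Fin n ⊕ Fin n → k)) := by
      funext v
      funext w
      cases v with
      | inl i =>
        cases w with
        | inl i' =>
          simp only [Function.comp_apply, LinearMap.funLeft_apply, hidx, Sum.elim_inl,
            Bfam, Dmat, hu, Pi.smul_apply', Pi.smul_apply, Units.smul_def, smul_eq_mul,
            Units.val_mk0, Pi.single_apply, Fin.coe_castSucc]
          split_ifs <;> simp_all [Fin.ext_iff]
        | inr j =>
          simp only [Function.comp_apply, LinearMap.funLeft_apply, hidx, Sum.elim_inr,
            Bfam, Dmat, hu, Pi.smul_apply', Pi.smul_apply, Units.smul_def, smul_eq_mul,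
            Units.val_mk0, Pi.single_apply, Sum.elim_inl]
          split_ifs <;> simp_all
      | inr j =>
        cases w with
        | inl i' =>
          simp only [Function.comp_apply, LinearMap.funLeft_apply, hidx, Sum.elim_inl,
            Sum.elim_inr, Bfam, hu, Pi.smul_apply', Pi.smul_apply, Units.smul_def,
            smul_eq_mul, Units.val_one, one_mul, Pi.single_apply, Prod.mk.injEq]
          simp
        | inr j' =>
          simp only [Function.comp_apply, LinearMap.funLeft_apply, hidx, Sum.elim_inr,
            Bfam, hu, Pi.smul_apply', Pi.smul_apply, Units.smul_def, smul_eq_mul,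
            Units.val_one, one_mul, Pi.single_apply, Prod.mk.injEq, Fin.succ_inj]
          simp [Fin.ext_iff]
    rw [key]
    have hbase : LinearIndependent k (fun v => (Pi.single v 1 : Fin n ⊕ Fin n → k)) := by
      rw [Fintype.linearIndependent_iff]
      intro g hg v
      have hgv := congrFun hg v
      simpa [Finset.sum_apply, Pi.single_apply, Finset.sum_ite_eq] using hgv
    exact hbase.units_smul u
  have : dMap k q q β n = (Dmat k q q β n).mulVecLin := rfl
  rw [this, Matrix.range_mulVecLin]
  change Module.finrank k ↥(Submodule.span k (Set.range (Dmat k q q β n)ᵀ)) = 2 * n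
  rw [hspan, finrank_span_eq_card hB]
  simp [Fintype.card_sum]
  ring

/-- if `char k = 2`, `α = q` and `β ∉ {qⁱ : i ∈ ℤ}`, then
`dim Im dₙ = 2n` for all `n ≥ 1`, and consequently
`dim Ker d_{n+1} − dim Im dₙ = 2` for every `n > 0`, i.e. `dim HHⁿ(Λ, ₁Λ_ψ) = 2`. -/
theorem stmt11 (k : Type) [Field k] (q β : k) (hq : q ≠ 0)
    (hq' : ∀ m : ℕ, 0 < m → q ^ m ≠ 1) (hβ : β ≠ 0)
    (hchar : ringChar k = 2)
    (hBetaSigma : ¬∃ i : ℤ, β = q ^ i)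
    (n : ℕ) (hn : 1 ≤ n) :
    Module.finrank k ↥(LinearMap.range (dMap k q q β n)) = 2 * n ∧
    Module.finrank k ↥(LinearMap.ker (dMap k q q β (n + 1))) =
      Module.finrank k ↥(LinearMap.range (dMap k q q β n)) + 2 := by
  have h1 := rank_d k q β hq hq' hchar hBetaSigma n
  have h2 := rank_d k q β hq hq' hchar hBetaSigma (n + 1)
  refine ⟨h1, ?_⟩
  have h3 := LinearMap.finrank_range_add_finrank_ker (dMap k q q β (n + 1))
  rw [h2, Module.finrank_fintype_fun_eq_card] at h3
  simp [Fintype.card_prod] at h3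
  omega
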